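/- Let W : I → ℝ^{d×d'}, U : I → ℝ^{d×k}, σ : I → ℝ^k, V : I → ℝ^{d'×k} (k := min(d, d')) be differentiable maps on an open interval I such that for every t ∈ I, W(t) = U(t)·diag(σ(t))·V(t)ᵀ and the columns of U(t) and of V(t) are orthonormal. Then for every t ∈ I and every r ∈ {1, …, k}, the signed singular values evolve by σ_r′(t) = u_r(t)ᵀ · W′(t) · v_r(t), where u_r(t) and v_r(t) are the r-th columns of U(t) and V(t). -/

import Mathlib

open Matrix

/-- Along a differentiable SVD path `W(t) = U(t)·diag(σ(t))·V(t)ᵀ` (with orthonormal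
columns of `U(t)` and `V(t)`), the signed singular values evolve by
`σᵣ′(t) = uᵣ(t)ᵀ · W′(t) · vᵣ(t)`. -/
theorem stmt8 {d d' : ℕ}
    (I : Set ℝ) (hI_open : IsOpen I) (hI_conn : I.OrdConnected)
    (W W' : ℝ → Matrix (Fin d) (Fin d') ℝ)
    (U U' : ℝ → Matrix (Fin d) (Fin (min d d')) ℝ)
    (σ σ' : ℝ → Fin (min d d') → ℝ)
    (V V' : ℝ → Matrix (Fin d') (Fin (min d d')) ℝ)
    (hW : ∀ t ∈ I, ∀ p q, HasDerivAt (fun s => W s p q) (W' t p q) t)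
    (hU : ∀ t ∈ I, ∀ p q, HasDerivAt (fun s => U s p q) (U' t p q) t)
    (hσ : ∀ t ∈ I, ∀ r, HasDerivAt (fun s => σ s r) (σ' t r) t)
    (hV : ∀ t ∈ I, ∀ p q, HasDerivAt (fun s => V s p q) (V' t p q) t)
    (hSVD : ∀ t ∈ I, W t = U t * Matrix.diagonal (σ t) * (V t)ᵀ)
    (hUorth : ∀ t ∈ I, (U t)ᵀ * U t = 1)
    (hVorth : ∀ t ∈ I, (V t)ᵀ * V t = 1) :
    ∀ t ∈ I, ∀ r, σ' t r = ((U t)ᵀ * W' t * V t) r r := by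
  intro t ht r
  have hmem : I ∈ nhds t := hI_open.mem_nhds ht
  -- (U'ᵀ U)_rr = 0
  have hUU : ∑ p, U' t p r * U t p r = 0 := by
    have h1 : HasDerivAt (fun s => ∑ p, U s p r * U s p r)
        (∑ p, (U' t p r * U t p r + U t p r * U' t p r)) t :=
      HasDerivAt.fun_sum fun p _ => (hU t ht p r).mul (hU t ht p r)
    have h2 : (fun s => ∑ p, U s p r * U s p r) =ᶠ[nhds t] fun _ => (1:ℝ) := by
      filter_upwards [hmem] with s hs
      have h3 : ((U s)ᵀ * U s) r r = (1 : Matrix _ _ ℝ) r r := by rw [hUorth s hs]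
      simpa [Matrix.mul_apply, Matrix.one_apply] using h3
    have h4 : HasDerivAt (fun _ : ℝ => (1:ℝ))
        (∑ p, (U' t p r * U t p r + U t p r * U' t p r)) t :=
      h1.congr_of_eventuallyEq h2.symm
    have h5 := h4.unique (hasDerivAt_const t 1)
    have h6 : ∑ p, (U' t p r * U t p r + U t p r * U' t p r)
        = 2 * ∑ p, U' t p r * U t p r := by
      rw [Finset.sum_add_distrib, two_mul]
      congr 1
      exact Finset.sum_congr rfl fun p _ => mul_comm _ _
    rw [h6] at h5
    linarith
  have hVV : ∑ q, V' t q r * V t q r = 0 := by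
    have h1 : HasDerivAt (fun s => ∑ q, V s q r * V s q r)
        (∑ q, (V' t q r * V t q r + V t q r * V' t q r)) t :=
      HasDerivAt.fun_sum fun q _ => (hV t ht q r).mul (hV t ht q r)
    have h2 : (fun s => ∑ q, V s q r * V s q r) =ᶠ[nhds t] fun _ => (1:ℝ) := by
      filter_upwards [hmem] with s hs
      have h3 : ((V s)ᵀ * V s) r r = (1 : Matrix _ _ ℝ) r r := by rw [hVorth s hs]
      simpa [Matrix.mul_apply, Matrix.one_apply] using h3
    have h4 : HasDerivAt (fun _ : ℝ => (1:ℝ))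
        (∑ q, (V' t q r * V t q r + V t q r * V' t q r)) t :=
      h1.congr_of_eventuallyEq h2.symm
    have h5 := h4.unique (hasDerivAt_const t 1)
    have h6 : ∑ q, (V' t q r * V t q r + V t q r * V' t q r)
        = 2 * ∑ q, V' t q r * V t q r := by
      rw [Finset.sum_add_distrib, two_mul]
      congr 1
      exact Finset.sum_congr rfl fun q _ => mul_comm _ _
    rw [h6] at h5
    linarith
  -- derivative of g s = ∑ q ∑ p, U s p r * W s p q * V s q r
  set A : ℝ := ∑ q, (∑ p, U' t p r * W t p q) * V t q r with hA
  set B : ℝ := ∑ q, (∑ p, U t p r * W' t p q) * V t q r with hB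
  set C : ℝ := ∑ q, (∑ p, U t p r * W t p q) * V' t q r with hC
  have hg : HasDerivAt (fun s => ∑ q, (∑ p, U s p r * W s p q) * V s q r)
      (A + B + C) t := by
    have : HasDerivAt (fun s => ∑ q, (∑ p, U s p r * W s p q) * V s q r) _ t :=
      HasDerivAt.fun_sum (u := Finset.univ)
      (fun q (_ : q ∈ Finset.univ) =>
        ((HasDerivAt.fun_sum (fun p (_ : p ∈ Finset.univ) =>
          (hU t ht p r).fun_mul (hW t ht p q))).fun_mul (hV t ht q r)))
    convert this using 1
    rw [hA, hB, hC]
    rw [← Finset.sum_add_distrib, ← Finset.sum_add_distrib]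
    refine Finset.sum_congr rfl fun q _ => ?_
    rw [Finset.sum_add_distrib]
    ring
  -- g equals σ · r on I
  have heq : (fun s => ∑ q, (∑ p, U s p r * W s p q) * V s q r)
      =ᶠ[nhds t] fun s => σ s r := by
    filter_upwards [hmem] with s hs
    have h3 : ((U s)ᵀ * W s * V s) r r = σ s r := by
      rw [hSVD s hs]
      have : (U s)ᵀ * (U s * Matrix.diagonal (σ s) * (V s)ᵀ) * V s
          = ((U s)ᵀ * U s) * Matrix.diagonal (σ s) * ((V s)ᵀ * V s) := by
        simp only [Matrix.mul_assoc]
      rw [this, hUorth s hs, hVorth s hs, Matrix.one_mul, Matrix.mul_one,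
        Matrix.diagonal_apply_eq]
    rw [← h3]
    simp [Matrix.mul_apply]
  have hσ' : σ' t r = A + B + C :=
    (hσ t ht r).unique (hg.congr_of_eventuallyEq heq.symm)
  -- A = 0
  have hA0 : A = 0 := by
    have hAe : A = ((U' t)ᵀ * W t * V t) r r := by
      simp [hA, Matrix.mul_apply]
    have hA2 : ((U' t)ᵀ * W t * V t) r r = (∑ p, U' t p r * U t p r) * σ t r := by
      rw [hSVD t ht]
      have : (U' t)ᵀ * (U t * Matrix.diagonal (σ t) * (V t)ᵀ) * V t
          = ((U' t)ᵀ * U t) * Matrix.diagonal (σ t) * ((V t)ᵀ * V t) := by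
        simp only [Matrix.mul_assoc]
      rw [this, hVorth t ht, Matrix.mul_one, Matrix.mul_diagonal]
      simp [Matrix.mul_apply]
    rw [hAe, hA2, hUU, zero_mul]
  -- C = 0
  have hC0 : C = 0 := by
    have hCe : C = ((U t)ᵀ * W t * V' t) r r := by
      simp [hC, Matrix.mul_apply]
    have hC2 : ((U t)ᵀ * W t * V' t) r r = σ t r * ∑ q, V t q r * V' t q r := by
      rw [hSVD t ht]
      have : (U t)ᵀ * (U t * Matrix.diagonal (σ t) * (V t)ᵀ) * V' t
          = ((U t)ᵀ * U t) * (Matrix.diagonal (σ t) * ((V t)ᵀ * V' t)) := by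
        simp only [Matrix.mul_assoc]
      rw [this, hUorth t ht, Matrix.one_mul, Matrix.diagonal_mul]
      simp [Matrix.mul_apply]
    have : ∑ q, V t q r * V' t q r = 0 := by
      rw [← hVV]; exact Finset.sum_congr rfl fun q _ => mul_comm _ _
    rw [hCe, hC2, this, mul_zero]
  have hBe : B = ((U t)ᵀ * W' t * V t) r r := by
    simp [hB, Matrix.mul_apply]
  rw [hσ', hA0, hC0, hBe]
  ring
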